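/- Let (W,S) be a Coxeter system, Q a word in the generators S, π ∈ W, and W a backward-saturated set of reduced words for π such that some subsequence of Q lies in W. Then the complex Δ_W(Q,π) is vertex-decomposable. -/

import Mathlib

/-!
STATEMENT 8: Let (W,S) be a Coxeter system, Q a word in the generators S, π ∈ W, and 𝒲 a
backward-saturated set of reduced words for π such that some subsequence of Q lies in 𝒲.
Then the complex Δ_𝒲(Q,π) is vertex-decomposable.
-/

open scoped Classical

/-- `F` is a facet (inclusion-maximal face) of the abstract simplicial complex `Δ`. -/
def IsFacet {V : Type*} (Δ : Set (Finset V)) (F : Finset V) : Prop :=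
  F ∈ Δ ∧ ∀ G ∈ Δ, F ⊆ G → F = G

/-- The complex `Δ` is pure: all facets have the same cardinality. -/
def IsPure {V : Type*} (Δ : Set (Finset V)) : Prop :=
  ∀ F G : Finset V, IsFacet Δ F → IsFacet Δ G → F.card = G.card

/-- The deletion of a vertex `v` from `Δ`. -/
def complexDel {V : Type*} (Δ : Set (Finset V)) (v : V) : Set (Finset V) :=
  {G ∈ Δ | v ∉ G}

/-- The link of a vertex `v` in `Δ`. -/
def complexLink {V : Type*} (Δ : Set (Finset V)) (v : V) : Set (Finset V) :=
  {G | v ∉ G ∧ G ∈ Δ ∧ insert v G ∈ Δ}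

/-- `Δ` is vertex-decomposable. -/
inductive VertexDecomposable {V : Type*} : Set (Finset V) → Prop
  | of_empty_face : VertexDecomposable {(∅ : Finset V)}
  | step (Δ : Set (Finset V)) (v : V) : IsPure Δ →
      VertexDecomposable (complexDel Δ v) → VertexDecomposable (complexLink Δ v) →
      VertexDecomposable Δ

/-- A set `Ws` of words is backward-saturated: either `Ws` is empty, or for each letter `σ`
such that `Ws` contains a word beginning with `σ`, the set `Ws'_σ = {w | σ·w ∈ Ws}` is
backward-saturated and every word of `Ws` contains some word of `Ws'_σ` as a subsequence. -/
inductive BackSat {B : Type*} : Set (List B) → Prop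
  | empty : BackSat (∅ : Set (List B))
  | step (Ws : Set (List B))
      (h1 : ∀ σ : B, (∃ w : List B, σ :: w ∈ Ws) → BackSat {w : List B | σ :: w ∈ Ws})
      (h2 : ∀ σ : B, (∃ w : List B, σ :: w ∈ Ws) →
        ∀ u ∈ Ws, ∃ w : List B, σ :: w ∈ Ws ∧ w.Sublist u) :
      BackSat Ws

variable {B W : Type*} [Group W] {M : CoxeterMatrix B}

/-- The word at the positions of `Q` not in `P`. -/
def complementWord (Q : List B) (P : Finset (Fin Q.length)) : List B :=
  ((List.finRange Q.length).filter (fun i => i ∉ P)).map Q.get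

/-- The complex `Δ_𝒲(Q,π)`: its faces are the subsets `P` of positions of `Q` such that the
complementary subword contains some word of `Ws` as a subsequence. -/
def DeltaW (Ws : Set (List B)) (Q : List B) : Set (Finset (Fin Q.length)) :=
  {P | ∃ w ∈ Ws, w.Sublist (complementWord Q P)}

section VDMap
variable {V V' : Type*}

lemma facet_of_map (f : V ↪ V') (Δ : Set (Finset V)) (F' : Finset V')
    (h : IsFacet ((fun F => F.map f) '' Δ) F') :
    ∃ F, F' = F.map f ∧ IsFacet Δ F := by
  obtain ⟨⟨F, hF, rfl⟩, hmax⟩ := h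
  refine ⟨F, rfl, hF, fun G hG hFG => ?_⟩
  have := hmax (G.map f) ⟨G, hG, rfl⟩ (Finset.map_subset_map.2 hFG)
  exact Finset.map_injective f this

lemma vd_map (f : V ↪ V') {Δ : Set (Finset V)} (h : VertexDecomposable Δ) :
    VertexDecomposable ((fun F => F.map f) '' Δ) := by
  induction h with
  | of_empty_face =>
    have : ((fun F => F.map f) '' {(∅ : Finset V)}) = {(∅ : Finset V')} := by
      simp
    rw [this]; exact VertexDecomposable.of_empty_face
  | step Δ v hpure hdel hlink ihdel ihlink =>
    refine VertexDecomposable.step _ (f v) ?_ ?_ ?_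
    · intro F' G' hF' hG'
      obtain ⟨F, rfl, hF⟩ := facet_of_map f Δ F' hF'
      obtain ⟨G, rfl, hG⟩ := facet_of_map f Δ G' hG'
      simpa using hpure F G hF hG
    · have : complexDel ((fun F => F.map f) '' Δ) (f v)
          = (fun F => F.map f) '' complexDel Δ v := by
        ext G
        constructor
        · rintro ⟨⟨F, hF, rfl⟩, hv⟩
          exact ⟨F, ⟨hF, fun hvF => hv (Finset.mem_map_of_mem f hvF)⟩, rfl⟩
        · rintro ⟨F, ⟨hF, hv⟩, rfl⟩
          exact ⟨⟨F, hF, rfl⟩, fun hc => hv (Finset.mem_map' f |>.1 hc)⟩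
      rw [this]; exact ihdel
    · have : complexLink ((fun F => F.map f) '' Δ) (f v)
          = (fun F => F.map f) '' complexLink Δ v := by
        ext G
        constructor
        · rintro ⟨hv, ⟨F, hF, rfl⟩, hins⟩
          obtain ⟨F'', hF'', hEq⟩ := hins
          have : F'' = insert v F := by
            apply Finset.map_injective f
            rw [Finset.map_insert]
            simpa using hEq
          refine ⟨F, ⟨fun hvF => hv (Finset.mem_map_of_mem f hvF), hF, ?_⟩, rfl⟩
          rw [← this]; exact hF''
        · rintro ⟨F, ⟨hv, hF, hins⟩, rfl⟩
          refine ⟨fun hc => hv (Finset.mem_map' f |>.1 hc), ⟨F, hF, rfl⟩, ?_⟩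
          exact ⟨insert v F, hins, by simp [Finset.map_insert]⟩
      rw [this]; exact ihlink
end VDMap

section Drop
lemma length_complementWord (Q : List B) (P : Finset (Fin Q.length)) :
    (complementWord Q P).length + P.card = Q.length := by
  have hnd : ((List.finRange Q.length).filter (fun i => decide (i ∈ P))).Nodup :=
    (List.nodup_finRange _).filter _
  have hcard : ((List.finRange Q.length).filter (fun i => decide (i ∈ P))).length = P.card := by
    rw [← List.toFinset_card_of_nodup hnd]
    congr 1
    ext i
    simp
  unfold complementWord
  rw [List.length_map]
  have h2 := List.length_eq_countP_add_countP (p := fun i => decide (i ∈ P)) (l := List.finRange Q.length)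
  rw [List.countP_eq_length_filter, List.countP_eq_length_filter, List.length_finRange] at h2
  have h3 : (List.filter (fun i => decide (i ∉ P)) (List.finRange Q.length))
      = (List.filter (fun a => decide (¬decide (a ∈ P) = true)) (List.finRange Q.length)) := by
    apply List.filter_congr
    intro i _
    simp
  rw [h3]
  omega

lemma sublist_drop_one {α : Type*} {w l : List α} (h : w.Sublist l) (hlt : w.length < l.length) :
    ∃ l1 a l2, l = l1 ++ a :: l2 ∧ w.Sublist (l1 ++ l2) := by
  induction h with
  | slnil => simp at hlt
  | cons a h ih => exact ⟨[], a, _, rfl, h⟩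
  | @cons_cons w' l' a h ih =>
    obtain ⟨l1, b, l2, rfl, hs⟩ := ih (by simpa using hlt)
    exact ⟨a :: l1, b, l2, rfl, by simpa using hs.cons₂ a⟩

lemma exists_insert_of_decomp (Q : List B) (F : Finset (Fin Q.length)) (l1 l2 : List B) (b : B)
    (h : complementWord Q F = l1 ++ b :: l2) :
    ∃ i, i ∉ F ∧ complementWord Q (insert i F) = l1 ++ l2 := by
  unfold complementWord at h ⊢
  set pl := (List.finRange Q.length).filter (fun i => i ∉ F) with hpl
  obtain ⟨p1, p2', hpl2, hm1, hm2⟩ := List.map_eq_append_iff.1 h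
  obtain ⟨i, p2, rfl, hib, hm2'⟩ := List.map_eq_cons_iff.1 hm2
  have hiF : i ∉ F := by
    have hmem : i ∈ pl := by rw [hpl2]; simp
    have := List.of_mem_filter hmem
    simpa using this
  have hnd : pl.Nodup := (List.nodup_finRange _).filter _
  rw [hpl2] at hnd
  have hi1 : i ∉ p1 := by
    have := (List.nodup_append.1 hnd).2.2
    intro hc
    exact this i hc i (by simp) rfl
  have hi2 : i ∉ p2 := by
    have := (List.nodup_append.1 hnd).2.1
    exact (List.nodup_cons.1 this).1
  refine ⟨i, hiF, ?_⟩
  have key : (List.finRange Q.length).filter (fun j => j ∉ insert i F)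
      = pl.filter (fun j => j ≠ i) := by
    rw [hpl, List.filter_filter]
    apply List.filter_congr
    intro j _
    by_cases h1 : j = i <;> by_cases h2 : j ∈ F <;> simp [h1, h2]
  rw [key, hpl2, List.filter_append, List.filter_cons]
  have h1 : p1.filter (fun j => !decide (j = i)) = p1 :=
    List.filter_eq_self.2 (fun j hj => by simp; exact fun hc => hi1 (hc ▸ hj))
  have h2 : p2.filter (fun j => !decide (j = i)) = p2 :=
    List.filter_eq_self.2 (fun j hj => by simp; exact fun hc => hi2 (hc ▸ hj))
  simp only [ne_eq, decide_not]
  simp [h1, h2, hm1, hm2']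

lemma isPure_deltaW (Ws : Set (List B)) (Q : List B)
    (hlen : ∀ w ∈ Ws, ∀ w' ∈ Ws, w.length = w'.length) :
    IsPure (DeltaW Ws Q) := by
  have key : ∀ F : Finset (Fin Q.length), IsFacet (DeltaW Ws Q) F →
      ∀ w ∈ Ws, w.Sublist (complementWord Q F) → (complementWord Q F).length = w.length := by
    intro F hF w hw hsub
    refine le_antisymm ?_ hsub.length_le
    by_contra hlt
    push_neg at hlt
    obtain ⟨l1, b, l2, hdec, hs⟩ := sublist_drop_one hsub hlt
    obtain ⟨i, hiF, hcomp⟩ := exists_insert_of_decomp Q F l1 l2 b hdec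
    have hmem : insert i F ∈ DeltaW Ws Q := ⟨w, hw, hcomp ▸ hs⟩
    have heq := hF.2 _ hmem (Finset.subset_insert i F)
    exact hiF (heq ▸ Finset.mem_insert_self i F)
  intro F G hF hG
  obtain ⟨wF, hwF, hsF⟩ := hF.1
  obtain ⟨wG, hwG, hsG⟩ := hG.1
  have h1 := key F hF wF hwF hsF
  have h2 := key G hG wG hwG hsG
  have h3 := length_complementWord Q F
  have h4 := length_complementWord Q G
  have h5 := hlen wF hwF wG hwG
  omega

/-- the embedding of positions of `l` into positions of `a::l`. -/
def embSucc (a : B) (l : List B) : Fin l.length ↪ Fin (a :: l).length :=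
  ⟨Fin.succ, Fin.succ_injective _⟩

/-- the first position of `a :: l`. -/
def zpos (a : B) (l : List B) : Fin (a :: l).length := ⟨0, Nat.succ_pos l.length⟩

lemma zpos_eq (a : B) (l : List B) : zpos a l = (0 : Fin (l.length + 1)) := by
  apply Fin.ext
  simp [zpos]

lemma comp_cons_map (a : B) (l : List B) (P : Finset (Fin l.length)) :
    complementWord (a :: l) (P.map (embSucc a l)) = a :: complementWord l P := by
  unfold complementWord
  rw [show List.finRange (a :: l).length
      = (0 : Fin (l.length + 1)) :: (List.finRange l.length).map Fin.succ
      from List.finRange_succ (n := l.length)]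
  rw [List.filter_cons, List.filter_map]
  have h0 : ((0 : Fin (l.length + 1)) ∉ P.map (embSucc a l)) := by
    simp [embSucc, Fin.succ_ne_zero]
  have hc : (decide ((0 : Fin (l.length + 1)) ∉ P.map (embSucc a l))) = true := by
    simpa using h0
  rw [hc, if_pos rfl]
  have hpred : ((fun i => decide (i ∉ P.map (embSucc a l))) ∘ Fin.succ)
      = fun j => decide (j ∉ P) := by
    funext j
    simp [embSucc, Function.comp, Finset.mem_map]
  rw [hpred]
  rw [List.map_cons, List.map_map]
  refine congrArg₂ _ rfl ?_
  apply List.map_congr_left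
  intro j hj
  exact List.get_cons_succ'

lemma comp_cons_insert (a : B) (l : List B) (P : Finset (Fin l.length))
    (R : Finset (Fin (a :: l).length))
    (hmem : ∀ j, j ∈ R ↔ j = zpos a l ∨ j ∈ P.map (embSucc a l)) :
    complementWord (a :: l) R = complementWord l P := by
  unfold complementWord
  rw [show List.finRange (a :: l).length
      = (0 : Fin (l.length + 1)) :: (List.finRange l.length).map Fin.succ
      from List.finRange_succ (n := l.length)]
  rw [List.filter_cons, List.filter_map]
  have h0R : (0 : Fin (l.length + 1)) ∈ R := (hmem _).2 (Or.inl (zpos_eq a l).symm)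
  have hc : (decide ((0 : Fin (l.length + 1)) ∉ R)) = false := by simp [h0R]
  rw [hc, if_neg (by simp)]
  have hpred : ((fun i => decide (i ∉ R)) ∘ Fin.succ) = fun j => decide (j ∉ P) := by
    funext j
    have hiff : Fin.succ j ∈ R ↔ j ∈ P := by
      rw [hmem]
      simp [embSucc, zpos_eq, Fin.succ_ne_zero, Fin.succ_inj]
    simp only [Function.comp_apply]
    by_cases hj : j ∈ P <;> simp [hj, hiff]
  rw [hpred, List.map_map]
  apply List.map_congr_left
  intro j hj
  exact List.get_cons_succ'

lemma exists_preimage_of_not_mem_zero (a : B) (l : List B)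
    (R : Finset (Fin (a :: l).length)) (h0 : zpos a l ∉ R) :
    ∃ P : Finset (Fin l.length), R = P.map (embSucc a l) := by
  classical
  rw [zpos_eq] at h0
  refine ⟨R.preimage Fin.succ (Fin.succ_injective _).injOn, ?_⟩
  ext j
  simp only [Finset.mem_map, Finset.mem_preimage, embSucc, Function.Embedding.coeFn_mk]
  constructor
  · intro hj
    have hne : j ≠ (0 : Fin (l.length + 1)) := fun hc => h0 (hc ▸ hj)
    obtain ⟨i, rfl⟩ := Fin.exists_succ_eq_of_ne_zero hne
    exact ⟨i, hj, rfl⟩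
  · rintro ⟨i, hi, rfl⟩
    exact hi

lemma zero_not_mem_map (a : B) (l : List B) (P : Finset (Fin l.length)) :
    zpos a l ∉ P.map (embSucc a l) := by
  rw [zpos_eq]
  simp [embSucc, Fin.succ_ne_zero]

lemma comp_sublist (Q : List B) (P : Finset (Fin Q.length)) :
    (complementWord Q P).Sublist Q := by
  unfold complementWord
  have h := (List.filter_sublist (p := fun i => decide (i ∉ P)) (l := List.finRange Q.length)).map Q.get
  rwa [List.map_get_finRange] at h

end Drop

theorem deltaW_vertexDecomposable (cs : CoxeterSystem M W) (Q : List B) (π : W)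
    (Ws : Set (List B))
    (hred : ∀ w ∈ Ws, cs.IsReduced w ∧ cs.wordProd w = π)
    (hbs : BackSat Ws)
    (hQ : ∃ w ∈ Ws, w.Sublist Q) :
    VertexDecomposable (DeltaW Ws Q) := by
  induction Q generalizing π Ws with
  | nil =>
    obtain ⟨w, hw, hsub⟩ := hQ
    have hwnil : w = [] := List.sublist_nil.1 hsub
    subst hwnil
    have hD : DeltaW Ws [] = {(∅ : Finset (Fin ([] : List B).length))} := by
      ext P
      have hP : P = ∅ := Finset.eq_empty_of_forall_notMem (fun i _ => i.elim0)
      subst hP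
      simp only [Set.mem_singleton_iff, iff_true_intro rfl, iff_true]
      exact ⟨[], hw, List.nil_sublist _⟩
    rw [hD]
    exact VertexDecomposable.of_empty_face
  | cons a l ih =>
    classical
    -- lengths of words in Ws are all equal
    have hlen : ∀ w ∈ Ws, ∀ w' ∈ Ws, w.length = w'.length := by
      intro w hw w' hw'
      have h1 : cs.length (cs.wordProd w) = w.length := (hred w hw).1
      have h2 : cs.length (cs.wordProd w') = w'.length := (hred w' hw').1
      rw [(hred w hw).2] at h1
      rw [(hred w' hw').2] at h2
      omega
    have hpure : IsPure (DeltaW Ws (a :: l)) := isPure_deltaW Ws (a :: l) hlen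
    by_cases hA : ∃ w : List B, a :: w ∈ Ws
    · -- Case B : some word of Ws starts with `a`
      obtain ⟨h1bs, h2bs⟩ : BackSat {w : List B | a :: w ∈ Ws} ∧
          (∀ u ∈ Ws, ∃ w : List B, a :: w ∈ Ws ∧ w.Sublist u) := by
        cases hbs with
        | empty => exact absurd hA.choose_spec (Set.notMem_empty _)
        | step Ws h1 h2 => exact ⟨h1 a hA, h2 a hA⟩
      set Ws' : Set (List B) := {w : List B | a :: w ∈ Ws} with hWs'
      set π' : W := (cs.simple a)⁻¹ * π with hπ'
      have hred' : ∀ w ∈ Ws', cs.IsReduced w ∧ cs.wordProd w = π' := by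
        intro w hw
        have hr : cs.length (cs.wordProd (a :: w)) = w.length + 1 := (hred _ hw).1
        have hp : cs.wordProd (a :: w) = π := (hred _ hw).2
        rw [cs.wordProd_cons] at hr hp
        have hle : cs.length (cs.wordProd w) ≤ w.length := cs.length_wordProd_le w
        have hge : w.length + 1 ≤ 1 + cs.length (cs.wordProd w) := by
          calc w.length + 1 = cs.length (cs.simple a * cs.wordProd w) := hr.symm
            _ ≤ cs.length (cs.simple a) + cs.length (cs.wordProd w) := cs.length_mul_le _ _
            _ = 1 + cs.length (cs.wordProd w) := by rw [cs.length_simple]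
        constructor
        · show cs.length (cs.wordProd w) = w.length
          omega
        · rw [hπ', ← hp]
          group
      -- no word of Ws' starts with `a`
      have hnoaa : ∀ w ∈ Ws', ∀ v : List B, w ≠ a :: v := by
        rintro w hw v rfl
        have hr : cs.length (cs.wordProd (a :: a :: v)) = v.length + 2 := (hred _ hw).1
        rw [cs.wordProd_cons, cs.wordProd_cons, ← mul_assoc, cs.simple_mul_simple_self,
          one_mul] at hr
        have := cs.length_wordProd_le v
        omega
      -- a word of Ws' is a subword of l
      have hQ' : ∃ w ∈ Ws', w.Sublist l := by
        obtain ⟨u, hu, hsub⟩ := hQ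
        obtain ⟨w, hw, hwu⟩ := h2bs u hu
        have hwal : w.Sublist (a :: l) := hwu.trans hsub
        rcases List.sublist_cons_iff.1 hwal with h | ⟨r, hr, _⟩
        · exact ⟨w, hw, h⟩
        · exact absurd hr (hnoaa w hw r)
      have VD1 : VertexDecomposable (DeltaW Ws' l) := ih π' Ws' hred' h1bs hQ'
      -- deletion of (zpos a l) is the complex of Ws' on l
      have hdel : complexDel (DeltaW Ws (a :: l)) (zpos a l)
          = (fun F => F.map (embSucc a l)) '' DeltaW Ws' l := by
        ext R
        constructor
        · rintro ⟨⟨w, hw, hsub⟩, h0⟩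
          obtain ⟨P, rfl⟩ := exists_preimage_of_not_mem_zero a l R h0
          rw [comp_cons_map] at hsub
          rcases List.sublist_cons_iff.1 hsub with h | ⟨r, rfl, hr⟩
          · obtain ⟨w', hw', hw'w⟩ := h2bs w hw
            exact ⟨P, ⟨w', hw', hw'w.trans h⟩, rfl⟩
          · exact ⟨P, ⟨r, hw, hr⟩, rfl⟩
        · rintro ⟨P, ⟨w', hw', hs⟩, rfl⟩
          refine ⟨⟨a :: w', hw', ?_⟩, zero_not_mem_map a l P⟩
          rw [comp_cons_map]
          exact hs.cons₂ a
      by_cases hL : ∃ w ∈ Ws, w.Sublist l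
      · -- pivot at (zpos a l)
        have hlink : complexLink (DeltaW Ws (a :: l)) (zpos a l)
            = (fun F => F.map (embSucc a l)) '' DeltaW Ws l := by
          ext R
          constructor
          · rintro ⟨h0, _, hins⟩
            obtain ⟨P, rfl⟩ := exists_preimage_of_not_mem_zero a l R h0
            obtain ⟨w, hw, hsub⟩ := hins
            rw [comp_cons_insert a l P _ (by intro j; simp [Finset.mem_insert])] at hsub
            exact ⟨P, ⟨w, hw, hsub⟩, rfl⟩
          · rintro ⟨P, ⟨w, hw, hs⟩, rfl⟩
            refine ⟨zero_not_mem_map a l P, ⟨w, hw, ?_⟩, ⟨w, hw, ?_⟩⟩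
            · rw [comp_cons_map]
              exact hs.cons _
            · rw [comp_cons_insert a l P _ (by intro j; simp [Finset.mem_insert])]
              exact hs
        refine VertexDecomposable.step _ (zpos a l) hpure ?_ ?_
        · rw [hdel]
          exact vd_map _ VD1
        · rw [hlink]
          exact vd_map _ (ih π Ws hred hbs hL)
      · -- no face contains (zpos a l), and the complex is a copy of DeltaW Ws' l
        have hnoz : ∀ R ∈ DeltaW Ws (a :: l), (zpos a l) ∉ R := by
          intro R hR hzR
          obtain ⟨P, hP⟩ := exists_preimage_of_not_mem_zero a l (R.erase (zpos a l))
            (Finset.notMem_erase (zpos a l) R)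
          obtain ⟨w, hw, hsub⟩ := hR
          have hre : R = insert (zpos a l) (P.map (embSucc a l)) := by
            rw [← hP, Finset.insert_erase hzR]
          rw [hre, comp_cons_insert a l P _ (by intro j; simp [Finset.mem_insert])] at hsub
          exact hL ⟨w, hw, hsub.trans (comp_sublist l P)⟩
        have heq : DeltaW Ws (a :: l) = complexDel (DeltaW Ws (a :: l)) (zpos a l) := by
          ext R
          exact ⟨fun h => ⟨h, hnoz R h⟩, fun h => h.1⟩
        rw [heq, hdel]
        exact vd_map _ VD1
    · -- Case A : no word of Ws starts with `a`; the complex is a cone over (zpos a l)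
      have key : ∀ w ∈ Ws, ∀ t : List B, w.Sublist (a :: t) → w.Sublist t := by
        intro w hw t hsub
        rcases List.sublist_cons_iff.1 hsub with h | ⟨r, hr, _⟩
        · exact h
        · exact absurd ⟨r, hr ▸ hw⟩ hA
      have hQ' : ∃ w ∈ Ws, w.Sublist l := by
        obtain ⟨w, hw, hsub⟩ := hQ
        exact ⟨w, hw, key w hw l hsub⟩
      have VD0 := ih π Ws hred hbs hQ'
      have hdel : complexDel (DeltaW Ws (a :: l)) (zpos a l)
          = (fun F => F.map (embSucc a l)) '' DeltaW Ws l := by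
        ext R
        constructor
        · rintro ⟨⟨w, hw, hsub⟩, h0⟩
          obtain ⟨P, rfl⟩ := exists_preimage_of_not_mem_zero a l R h0
          rw [comp_cons_map] at hsub
          exact ⟨P, ⟨w, hw, key w hw _ hsub⟩, rfl⟩
        · rintro ⟨P, ⟨w, hw, hs⟩, rfl⟩
          refine ⟨⟨w, hw, ?_⟩, zero_not_mem_map a l P⟩
          rw [comp_cons_map]
          exact hs.cons _
      have hlink : complexLink (DeltaW Ws (a :: l)) (zpos a l)
          = (fun F => F.map (embSucc a l)) '' DeltaW Ws l := by
        ext R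
        constructor
        · rintro ⟨h0, _, hins⟩
          obtain ⟨P, rfl⟩ := exists_preimage_of_not_mem_zero a l R h0
          obtain ⟨w, hw, hsub⟩ := hins
          rw [comp_cons_insert a l P _ (by intro j; simp [Finset.mem_insert])] at hsub
          exact ⟨P, ⟨w, hw, hsub⟩, rfl⟩
        · rintro ⟨P, ⟨w, hw, hs⟩, rfl⟩
          refine ⟨zero_not_mem_map a l P, ⟨w, hw, ?_⟩, ⟨w, hw, ?_⟩⟩
          · rw [comp_cons_map]
            exact hs.cons _
          · rw [comp_cons_insert a l P _ (by intro j; simp [Finset.mem_insert])]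
            exact hs
      refine VertexDecomposable.step _ (zpos a l) hpure ?_ ?_
      · rw [hdel]
        exact vd_map _ VD0
      · rw [hlink]
        exact vd_map _ VD0
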